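/- Let f : ℝ → ℝ be twice continuously differentiable, and let y₀ satisfy f'(y₀) = 0 and f''(y) ≤ −λ < 0 for all y in an interval I = [y₀ − r, y₀ + r]. Let g : ℝ → ℝ be continuously differentiable with sup_{y∈I}|g'(y) − f'(y)| ≤ δ < λ r. If ŷ ∈ I satisfies g'(ŷ) = 0, then |ŷ − y₀| ≤ δ/λ. -/

import Mathlib

/-- Quantitative stability of nondegenerate critical points: a critical point
of g in I = [y₀−r, y₀+r] is within δ/λ of the critical point y₀ of f, when
f'' ≤ −λ on I and sup_I |g' − f'| ≤ δ < λr. -/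
theorem critical_point_stability
    (f g : ℝ → ℝ) (hf : ContDiff ℝ 2 f) (hg : ContDiff ℝ 1 g)
    (y₀ r lam δ : ℝ) (hr : 0 < r) (hlam : 0 < lam)
    (hcrit : deriv f y₀ = 0)
    (hcurv : ∀ y ∈ Set.Icc (y₀ - r) (y₀ + r), deriv (deriv f) y ≤ -lam)
    (hδ : ∀ y ∈ Set.Icc (y₀ - r) (y₀ + r), |deriv g y - deriv f y| ≤ δ)
    (hδr : δ < lam * r)
    (yhat : ℝ) (hyhat : yhat ∈ Set.Icc (y₀ - r) (y₀ + r))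
    (hghat : deriv g yhat = 0) :
    |yhat - y₀| ≤ δ / lam := by
  have hy₀ : y₀ ∈ Set.Icc (y₀ - r) (y₀ + r) := by
    constructor <;> linarith
  have hδ0 : 0 ≤ δ := le_trans (abs_nonneg _) (hδ y₀ hy₀)
  -- |f'(yhat)| ≤ δ
  have hfhat : |deriv f yhat| ≤ δ := by
    have := hδ yhat hyhat
    rw [hghat] at this
    rwa [abs_sub_comm, sub_zero] at this
  rcases eq_or_ne yhat y₀ with h | h
  · subst h
    simp only [sub_self, abs_zero]
    positivity
  -- f' is differentiable
  have hf' : Differentiable ℝ (deriv f) := (hf.iterate_deriv' 1 1).differentiable (by norm_num)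
  have hcont : Continuous (deriv f) := hf'.continuous
  -- MVT between min and max of yhat, y₀
  set a := min yhat y₀
  set b := max yhat y₀
  have hab : a < b := min_lt_max.2 h
  have hsub : Set.Icc a b ⊆ Set.Icc (y₀ - r) (y₀ + r) := by
    apply Set.Icc_subset_Icc
    · exact le_min hyhat.1 hy₀.1
    · exact max_le hyhat.2 hy₀.2
  obtain ⟨c, hc, hceq⟩ := exists_hasDerivAt_eq_slope (deriv f) (deriv (deriv f)) hab
    (hcont.continuousOn)
    (fun x _ => (hf' x).hasDerivAt)
  have hcI : c ∈ Set.Icc (y₀ - r) (y₀ + r) := hsub (Set.Ioo_subset_Icc_self hc)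
  have hcle : deriv (deriv f) c ≤ -lam := hcurv c hcI
  -- |f' b - f' a| = |f'' c| * (b - a) ≥ lam * (b - a)
  have hslope : deriv f b - deriv f a = deriv (deriv f) c * (b - a) := by
    have hne : b - a ≠ 0 := sub_ne_zero.2 hab.ne'
    rw [eq_div_iff hne] at hceq
    linarith [hceq]
  have habs : |deriv f yhat| = |deriv f b - deriv f a| := by
    rcases le_total yhat y₀ with hle | hle
    · have ha : a = yhat := min_eq_left hle
      have hb : b = y₀ := max_eq_right hle
      rw [ha, hb, hcrit, zero_sub, abs_neg]
    · have ha : a = y₀ := min_eq_right hle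
      have hb : b = yhat := max_eq_left hle
      rw [ha, hb, hcrit, sub_zero]
  have hba : |yhat - y₀| = b - a := (abs_sub_comm yhat y₀).trans (max_sub_min_eq_abs yhat y₀).symm
  have hlb : lam * (b - a) ≤ |deriv f yhat| := by
    rw [habs, hslope, abs_mul, abs_of_nonneg (by linarith : (0:ℝ) ≤ b - a)]
    have : lam ≤ |deriv (deriv f) c| := by
      rw [abs_le] at *
      rcases le_or_gt 0 (deriv (deriv f) c) with h' | h'
      · linarith
      · rw [abs_of_neg h']; linarith
    nlinarith
  rw [hba, le_div_iff₀ hlam]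
  nlinarith [hlb, hfhat]
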